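/- If ℵ_ω < 𝔠, then ℵ_ω is not a precaliber* for the countably infinite discrete space (the natural numbers with the discrete topology); in particular there exists a countably infinite metrizable space X such that the caliber* cardinals of X are not exactly the uncountable cardinals. -/

import Mathlib

open Cardinal Set

universe u

/-- `κ` is a caliber for `X`: every κ-indexed family of non-empty open sets
(repetitions allowed) has a κ-sized subfamily with non-empty intersection. -/
def IsCaliber (X : Type u) [TopologicalSpace X] (κ : Cardinal.{u}) : Prop :=
  ∀ {ι : Type u} (U : ι → Set X), #ι = κ → (∀ i, IsOpen (U i)) → (∀ i, (U i).Nonempty) →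
    ∃ J : Set ι, #J = κ ∧ (⋂ i ∈ J, U i).Nonempty

/-- `κ` is a precaliber for `X`: every κ-indexed family of non-empty open sets
has a κ-sized subfamily which is centered. -/
def IsPrecaliber (X : Type u) [TopologicalSpace X] (κ : Cardinal.{u}) : Prop :=
  ∀ {ι : Type u} (U : ι → Set X), #ι = κ → (∀ i, IsOpen (U i)) → (∀ i, (U i).Nonempty) →
    ∃ J : Set ι, #J = κ ∧
      ∀ s : Finset ι, ↑s ⊆ J → s.Nonempty → (⋂ i ∈ s, U i).Nonempty

/-- `κ` is a weak precaliber for `X`: every κ-indexed family of non-empty open sets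
has a κ-sized subfamily which is linked. -/
def IsWeakPrecaliber (X : Type u) [TopologicalSpace X] (κ : Cardinal.{u}) : Prop :=
  ∀ {ι : Type u} (U : ι → Set X), #ι = κ → (∀ i, IsOpen (U i)) → (∀ i, (U i).Nonempty) →
    ∃ J : Set ι, #J = κ ∧ ∀ i ∈ J, ∀ j ∈ J, (U i ∩ U j).Nonempty

/-- `κ` is a caliber* for `X`: every family of non-empty open sets of cardinality `κ`
has a subfamily of cardinality `κ` with non-empty intersection. -/
def IsCaliberStar (X : Type u) [TopologicalSpace X] (κ : Cardinal.{u}) : Prop :=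
  ∀ 𝒰 : Set (Set X), #𝒰 = κ → (∀ U ∈ 𝒰, IsOpen U) → (∀ U ∈ 𝒰, U.Nonempty) →
    ∃ 𝒱 ⊆ 𝒰, #𝒱 = κ ∧ (⋂₀ 𝒱).Nonempty

/-- `κ` is a precaliber* for `X`: every family of non-empty open sets of cardinality `κ`
has a centered subfamily of cardinality `κ`. -/
def IsPrecaliberStar (X : Type u) [TopologicalSpace X] (κ : Cardinal.{u}) : Prop :=
  ∀ 𝒰 : Set (Set X), #𝒰 = κ → (∀ U ∈ 𝒰, IsOpen U) → (∀ U ∈ 𝒰, U.Nonempty) →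
    ∃ 𝒱 ⊆ 𝒰, #𝒱 = κ ∧
      ∀ s : Finset (Set X), ↑s ⊆ 𝒱 → s.Nonempty → (⋂₀ (↑s : Set (Set X))).Nonempty

/-- `κ` is a weak precaliber* for `X`: every family of non-empty open sets of
cardinality `κ` has a linked subfamily of cardinality `κ`. -/
def IsWeakPrecaliberStar (X : Type u) [TopologicalSpace X] (κ : Cardinal.{u}) : Prop :=
  ∀ 𝒰 : Set (Set X), #𝒰 = κ → (∀ U ∈ 𝒰, IsOpen U) → (∀ U ∈ 𝒰, U.Nonempty) →
    ∃ 𝒱 ⊆ 𝒰, #𝒱 = κ ∧ ∀ U ∈ 𝒱, ∀ V ∈ 𝒱, (U ∩ V).Nonempty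

/-- `o X` : the number of open subsets of `X`. -/
def oCard (X : Type u) [TopologicalSpace X] : Cardinal.{u} :=
  #{U : Set X | IsOpen U}

/-- A cellular family: a pairwise disjoint collection of non-empty open sets. -/
def IsCellularFamily (X : Type u) [TopologicalSpace X] (𝒰 : Set (Set X)) : Prop :=
  (∀ U ∈ 𝒰, IsOpen U) ∧ (∀ U ∈ 𝒰, U.Nonempty) ∧ 𝒰.Pairwise Disjoint


open Cardinal Set

namespace Stmt15Aux

/-- The shifting map -/
def g (n : ℕ) (S : Set ℕ) : Set ℕ := Nat.pair n '' (insert 0 ((· + 1) '' S))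

lemma g_inj (n : ℕ) : Function.Injective (g n) := by
  intro S T hST
  have hp : Function.Injective (Nat.pair n) := fun a b hab => by
    have := congrArg (fun x => (Nat.unpair x).2) hab
    simpa [Nat.unpair_pair] using this
  have h2 : insert 0 ((· + 1) '' S) = insert 0 ((· + 1) '' T) :=
    Set.image_injective.2 hp hST
  ext x
  constructor
  · intro hx
    have : (x + 1) ∈ insert 0 ((· + 1) '' T) := by rw [← h2]; exact Set.mem_insert_of_mem _ ⟨x, hx, rfl⟩
    simpa using this
  · intro hx
    have : (x + 1) ∈ insert 0 ((· + 1) '' S) := by rw [h2]; exact Set.mem_insert_of_mem _ ⟨x, hx, rfl⟩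
    simpa using this

lemma g_nonempty (n : ℕ) (S : Set ℕ) : (g n S).Nonempty :=
  ⟨Nat.pair n 0, ⟨0, by simp, rfl⟩⟩

lemma g_fst (n : ℕ) (S : Set ℕ) {x : ℕ} (hx : x ∈ g n S) : (Nat.unpair x).1 = n := by
  obtain ⟨y, -, rfl⟩ := hx
  simp [Nat.unpair_pair]

end Stmt15Aux

open Stmt15Aux

open Ordinal in
theorem stmt15 (h : Cardinal.aleph ω < Cardinal.continuum.{0}) :
    ¬ IsPrecaliberStar ℕ (Cardinal.aleph ω) ∧
    ∃ (X : Type) (_ : TopologicalSpace X), TopologicalSpace.MetrizableSpace X ∧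
      Countable X ∧ Infinite X ∧
      ¬ (∀ lam : Cardinal.{0}, ℵ₀ ≤ lam → (IsCaliberStar X lam ↔ ℵ₀ < lam)) := by
  classical
  have hP : ¬ IsPrecaliberStar ℕ (Cardinal.aleph ω) := by
    intro hpc
    -- choose, for each n, a family of ℵ_n many sets
    have hT : ∀ n : ℕ, ∃ T : Set (Set ℕ), #T = ℵ_ n := by
      intro n
      apply Cardinal.le_mk_iff_exists_set.1
      rw [Cardinal.mk_set, Cardinal.mk_nat, two_power_aleph0]
      exact ((aleph_lt_aleph.2 (Ordinal.nat_lt_omega0 n)).trans h).le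
    choose T hTcard using hT
    set F : ℕ → Set (Set ℕ) := fun n => g n '' T n with hF
    have hFcard : ∀ n, #(F n) = ℵ_ n := fun n => by
      rw [hF]; rw [Cardinal.mk_image_eq (g_inj n)]; exact hTcard n
    set 𝒰 : Set (Set ℕ) := ⋃ n, F n with h𝒰
    have h𝒰card : #𝒰 = ℵ_ ω := by
      apply le_antisymm
      · calc #𝒰 ≤ #ℕ * ⨆ n, #(F n) := Cardinal.mk_iUnion_le F
          _ ≤ ℵ₀ * ℵ_ ω := by
              rw [Cardinal.mk_nat]
              refine mul_le_mul_right (ciSup_le' fun n => ?_) _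
              rw [hFcard n]
              exact (aleph_lt_aleph.2 (Ordinal.nat_lt_omega0 n)).le
          _ = ℵ_ ω := Cardinal.mul_eq_right (aleph0_le_aleph ω)
              (aleph0_le_aleph ω) Cardinal.aleph0_ne_zero
      · rw [aleph_limit Ordinal.isSuccLimit_omega0]
        apply ciSup_le'
        rintro ⟨a, ha⟩
        obtain ⟨n, rfl⟩ := Ordinal.lt_omega0.1 ha
        rw [← hFcard n]
        exact Cardinal.mk_le_mk_of_subset (Set.subset_iUnion F n)
    obtain ⟨𝒱, h𝒱sub, h𝒱card, h𝒱cent⟩ := hpc 𝒰 h𝒰card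
      (fun U _ => isOpen_discrete U)
      (fun U hU => by
        obtain ⟨n, hn⟩ := Set.mem_iUnion.1 hU
        obtain ⟨S, -, rfl⟩ := hn
        exact g_nonempty n S)
    have h𝒱ne : 𝒱.Nonempty := by
      rw [Set.nonempty_coe_sort.symm, ← Cardinal.mk_ne_zero_iff, h𝒱card]
      exact (aleph0_pos.trans_le (aleph0_le_aleph ω)).ne'
    obtain ⟨U, hU⟩ := h𝒱ne
    obtain ⟨n, hUn⟩ := Set.mem_iUnion.1 (h𝒱sub hU)
    have hnotsub : ¬ 𝒱 ⊆ F n := by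
      intro hsub
      have := Cardinal.mk_le_mk_of_subset hsub
      rw [h𝒱card, hFcard n] at this
      exact absurd this (not_le.2 (aleph_lt_aleph.2 (Ordinal.nat_lt_omega0 n)))
    obtain ⟨V, hV, hVn⟩ := Set.not_subset.1 hnotsub
    obtain ⟨m, hVm⟩ := Set.mem_iUnion.1 (h𝒱sub hV)
    have hnm : n ≠ m := fun hnm => hVn (hnm ▸ hVm)
    obtain ⟨S, -, rfl⟩ := hUn
    obtain ⟨S', -, rfl⟩ := hVm
    have hd : g n S ∩ g m S' = ∅ := by
      ext x
      simp only [Set.mem_inter_iff, Set.mem_empty_iff_false, iff_false, not_and]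
      intro hx hx'
      exact hnm ((g_fst n S hx).symm.trans (g_fst m S' hx'))
    have hne : (⋂₀ (↑({g n S, g m S'} : Finset (Set ℕ)) : Set (Set ℕ))).Nonempty := by
      apply h𝒱cent
      · intro W hW
        simp only [Finset.coe_insert, Finset.coe_singleton, Set.mem_insert_iff,
          Set.mem_singleton_iff] at hW
        rcases hW with rfl | rfl
        · exact hU
        · exact hV
      · exact ⟨g n S, by simp⟩
    rw [show (↑({g n S, g m S'} : Finset (Set ℕ)) : Set (Set ℕ)) = {g n S, g m S'} by simp,
      Set.sInter_pair, hd] at hne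
    exact Set.not_nonempty_empty hne
  refine ⟨hP, ℕ, inferInstance, inferInstance, inferInstance, inferInstance, ?_⟩
  intro hall
  have h1 : ℵ₀ < ℵ_ ω := by
    rw [← aleph_zero]
    exact aleph_lt_aleph.2 omega0_pos
  have hcal : IsCaliberStar ℕ (ℵ_ ω) := (hall (ℵ_ ω) h1.le).2 h1
  apply hP
  intro 𝒰 hc ho hn
  obtain ⟨𝒱, hsub, hcard, x, hx⟩ := hcal 𝒰 hc ho hn
  refine ⟨𝒱, hsub, hcard, fun s hs hsne => ⟨x, fun W hW => hx W (hs hW)⟩⟩
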